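/- Let X be a real-valued random variable with E[X²] < ∞, and let α be the pushforward of the Lebesgue measure on ℝ under the map a ↦ P(X ≥ a). Then Var(X) = K(α, α^R). -/

import Mathlib

open MeasureTheory

/-- The reversal `λ^R` of a Borel measure on `[0,1]`, i.e. the image of `λ` under
`x ↦ 1 − x` (so that `λ^R(E) = λ({1 − x : x ∈ E})`). -/
noncomputable def revM (lam : Measure (Set.Icc (0 : ℝ) 1)) : Measure (Set.Icc (0 : ℝ) 1) :=
  lam.map (fun x => ⟨1 - x.1,
    Set.mem_Icc.mpr ⟨by linarith [(Set.mem_Icc.mp x.2).2], by linarith [(Set.mem_Icc.mp x.2).1]⟩⟩)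

/-- The bilinear functional
`K_c(λ,ν) = ∫∫ min{√(1−c)·xy, (1−x)(1−y)/√(1−c)} dλ(x) dν(y)`, valued in `[0,∞]`.
For `c = 0` this is the functional `K(λ,ν) = ∫∫ min{xy, (1−x)(1−y)} dλ(x) dν(y)`. -/
noncomputable def Kc (c : ℝ) (lam nu : Measure (Set.Icc (0 : ℝ) 1)) : ENNReal :=
  ∫⁻ x, ∫⁻ y, ENNReal.ofReal (min (Real.sqrt (1 - c) * (x.1 * y.1))
    ((1 - x.1) * (1 - y.1) / Real.sqrt (1 - c))) ∂nu ∂lam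

/-- The pushforward of the Lebesgue measure on `ℝ` under `a ↦ P(X ≥ a)`, viewed as a
Borel measure on `[0,1]`. -/
noncomputable def pushCDF {Ω : Type*} [MeasurableSpace Ω] (μ : Measure Ω)
    [IsProbabilityMeasure μ] (X : Ω → ℝ) : Measure (Set.Icc (0 : ℝ) 1) :=
  Measure.map (fun a : ℝ => (⟨(μ {ω | a ≤ X ω}).toReal,
    Set.mem_Icc.mpr ⟨ENNReal.toReal_nonneg, by
      simpa using ENNReal.toReal_mono (by simp) (prob_le_one (μ := μ))⟩⟩ :
    Set.Icc (0 : ℝ) 1)) volume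

/-! ### Auxiliary development -/

section Aux

open Set

/-- Tail probability function `a ↦ ν([a,∞))`. -/
noncomputable def Gr (ν : Measure ℝ) (a : ℝ) : ℝ := (ν (Set.Ici a)).toReal

variable {ν : Measure ℝ} [IsProbabilityMeasure ν]

lemma Gr_nonneg (a : ℝ) : 0 ≤ Gr ν a := ENNReal.toReal_nonneg

lemma Gr_le_one (a : ℝ) : Gr ν a ≤ 1 := by
  have := prob_le_one (μ := ν) (s := Set.Ici a)
  simpa [Gr] using ENNReal.toReal_mono (by simp) this

lemma Gr_anti : Antitone (Gr ν) := fun a b h =>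
  ENNReal.toReal_mono (measure_ne_top _ _) (measure_mono (Set.Ici_subset_Ici.mpr h))

lemma measurable_Gr : Measurable (Gr ν) := Gr_anti.measurable

lemma ofReal_Gr (a : ℝ) : ENNReal.ofReal (Gr ν a) = ν (Set.Ici a) :=
  ENNReal.ofReal_toReal (measure_ne_top _ _)

lemma Iio_eq_ofReal (a : ℝ) : ν (Set.Iio a) = ENNReal.ofReal (1 - Gr ν a) := by
  rw [ENNReal.ofReal_sub _ (Gr_nonneg a), ofReal_Gr, ENNReal.ofReal_one,
    ← Set.compl_Ici, measure_compl measurableSet_Ici (measure_ne_top _ _), measure_univ]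

/-- Pointwise splitting of the product of indicators. -/
lemma ind_split {a b : ℝ} (hab : a ≤ b) (x y : ℝ) :
    (Set.Ioc (min x y) (max x y)).indicator (1 : ℝ → ENNReal) a *
      (Set.Ioc (min x y) (max x y)).indicator (1 : ℝ → ENNReal) b =
    (Set.Iio a).indicator (1 : ℝ → ENNReal) x * (Set.Ici b).indicator (1 : ℝ → ENNReal) y +
      (Set.Iio a).indicator (1 : ℝ → ENNReal) y * (Set.Ici b).indicator (1 : ℝ → ENNReal) x := by
  simp only [Set.indicator_apply, Set.mem_Ioc, Set.mem_Iio, Set.mem_Ici, Pi.one_apply]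
  rcases le_total x y with h | h
  · rw [min_eq_left h, max_eq_right h]
    split_ifs <;> simp_all <;> linarith
  · rw [min_eq_right h, max_eq_left h]
    split_ifs <;> simp_all <;> linarith

lemma double_ind_eq {a b : ℝ} (hab : a ≤ b) :
    ∫⁻ x, ∫⁻ y, (Set.Ioc (min x y) (max x y)).indicator (1 : ℝ → ENNReal) a *
        (Set.Ioc (min x y) (max x y)).indicator (1 : ℝ → ENNReal) b ∂ν ∂ν =
      2 * (ν (Set.Iio a) * ν (Set.Ici b)) := by
  have hIio : Measurable ((Set.Iio a).indicator (1 : ℝ → ENNReal)) :=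
    measurable_one.indicator measurableSet_Iio
  have hIci : Measurable ((Set.Ici b).indicator (1 : ℝ → ENNReal)) :=
    measurable_one.indicator measurableSet_Ici
  have inner : ∀ x : ℝ, (∫⁻ y, (Set.Ioc (min x y) (max x y)).indicator (1 : ℝ → ENNReal) a *
        (Set.Ioc (min x y) (max x y)).indicator (1 : ℝ → ENNReal) b ∂ν)
      = (Set.Iio a).indicator (1 : ℝ → ENNReal) x * ν (Set.Ici b) +
        (Set.Ici b).indicator (1 : ℝ → ENNReal) x * ν (Set.Iio a) := by
    intro x
    have : (fun y => (Set.Ioc (min x y) (max x y)).indicator (1 : ℝ → ENNReal) a *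
        (Set.Ioc (min x y) (max x y)).indicator (1 : ℝ → ENNReal) b)
        = fun y => (Set.Iio a).indicator (1 : ℝ → ENNReal) x *
            (Set.Ici b).indicator (1 : ℝ → ENNReal) y +
          (Set.Ici b).indicator (1 : ℝ → ENNReal) x *
            (Set.Iio a).indicator (1 : ℝ → ENNReal) y := by
      funext y
      rw [ind_split hab x y]
      ring
    rw [this, lintegral_add_left (hIci.const_mul _), lintegral_const_mul _ hIci,
      lintegral_const_mul _ hIio, lintegral_indicator_one measurableSet_Ici,
      lintegral_indicator_one measurableSet_Iio]
  simp_rw [inner]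
  rw [lintegral_add_left (hIio.mul_const _), lintegral_mul_const _ hIio,
    lintegral_mul_const _ hIci, lintegral_indicator_one measurableSet_Iio,
    lintegral_indicator_one measurableSet_Ici]
  ring

lemma two_ofReal_min_of_le {a b : ℝ} (hab : a ≤ b) :
    ∫⁻ x, ∫⁻ y, (Set.Ioc (min x y) (max x y)).indicator (1 : ℝ → ENNReal) a *
        (Set.Ioc (min x y) (max x y)).indicator (1 : ℝ → ENNReal) b ∂ν ∂ν =
      2 * ENNReal.ofReal (min (Gr ν a * (1 - Gr ν b)) ((1 - Gr ν a) * Gr ν b)) := by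
  rw [double_ind_eq hab]
  have hba : Gr ν b ≤ Gr ν a := Gr_anti hab
  have hmin : min (Gr ν a * (1 - Gr ν b)) ((1 - Gr ν a) * Gr ν b) = (1 - Gr ν a) * Gr ν b := by
    apply min_eq_right
    nlinarith [Gr_nonneg (ν := ν) a, Gr_nonneg (ν := ν) b, Gr_le_one (ν := ν) a,
      Gr_le_one (ν := ν) b]
  rw [hmin, ENNReal.ofReal_mul (by linarith [Gr_le_one (ν := ν) a]), ofReal_Gr,
    ← Iio_eq_ofReal]

lemma two_ofReal_min (a b : ℝ) :
    ∫⁻ x, ∫⁻ y, (Set.Ioc (min x y) (max x y)).indicator (1 : ℝ → ENNReal) a *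
        (Set.Ioc (min x y) (max x y)).indicator (1 : ℝ → ENNReal) b ∂ν ∂ν =
      2 * ENNReal.ofReal (min (Gr ν a * (1 - Gr ν b)) ((1 - Gr ν a) * Gr ν b)) := by
  rcases le_total a b with hab | hba
  · exact two_ofReal_min_of_le hab
  · have := two_ofReal_min_of_le (ν := ν) hba
    calc ∫⁻ x, ∫⁻ y, (Set.Ioc (min x y) (max x y)).indicator (1 : ℝ → ENNReal) a *
          (Set.Ioc (min x y) (max x y)).indicator (1 : ℝ → ENNReal) b ∂ν ∂ν
        = ∫⁻ x, ∫⁻ y, (Set.Ioc (min x y) (max x y)).indicator (1 : ℝ → ENNReal) b *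
          (Set.Ioc (min x y) (max x y)).indicator (1 : ℝ → ENNReal) a ∂ν ∂ν := by
          simp_rw [mul_comm]
      _ = 2 * ENNReal.ofReal (min (Gr ν b * (1 - Gr ν a)) ((1 - Gr ν b) * Gr ν a)) := this
      _ = 2 * ENNReal.ofReal (min (Gr ν a * (1 - Gr ν b)) ((1 - Gr ν a) * Gr ν b)) := by
          rw [min_comm, mul_comm (Gr ν b) _, mul_comm (1 - Gr ν b) _]

lemma leb_double (x y : ℝ) :
    ∫⁻ a, ∫⁻ b, (Set.Ioc (min x y) (max x y)).indicator (1 : ℝ → ENNReal) a *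
        (Set.Ioc (min x y) (max x y)).indicator (1 : ℝ → ENNReal) b ∂volume ∂volume =
      ENNReal.ofReal ((x - y) ^ 2) := by
  have hind : Measurable ((Set.Ioc (min x y) (max x y)).indicator (1 : ℝ → ENNReal)) :=
    measurable_one.indicator measurableSet_Ioc
  have hb : ∀ a : ℝ, (∫⁻ b, (Set.Ioc (min x y) (max x y)).indicator (1 : ℝ → ENNReal) a *
        (Set.Ioc (min x y) (max x y)).indicator (1 : ℝ → ENNReal) b ∂volume)
      = (Set.Ioc (min x y) (max x y)).indicator (1 : ℝ → ENNReal) a *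
        ENNReal.ofReal (max x y - min x y) := by
    intro a
    rw [lintegral_const_mul _ hind, lintegral_indicator_one measurableSet_Ioc,
      Real.volume_Ioc]
  simp_rw [hb]
  rw [lintegral_mul_const _ hind, lintegral_indicator_one measurableSet_Ioc, Real.volume_Ioc,
    ← ENNReal.ofReal_mul (sub_nonneg.mpr (min_le_max))]
  congr 1
  rw [max_sub_min_eq_abs, ← sq_abs, sq, abs_sub_comm]

lemma measPhi : Measurable (fun z : (ℝ × ℝ) × ℝ × ℝ =>
    (Set.Ioc (min z.2.1 z.2.2) (max z.2.1 z.2.2)).indicator (1 : ℝ → ENNReal) z.1.1 *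
    (Set.Ioc (min z.2.1 z.2.2) (max z.2.1 z.2.2)).indicator (1 : ℝ → ENNReal) z.1.2) := by
  have m1 : Measurable fun z : (ℝ × ℝ) × ℝ × ℝ => min z.2.1 z.2.2 :=
    measurable_snd.fst.min measurable_snd.snd
  have m2 : Measurable fun z : (ℝ × ℝ) × ℝ × ℝ => max z.2.1 z.2.2 :=
    measurable_snd.fst.max measurable_snd.snd
  have key : ∀ w : (ℝ × ℝ) × ℝ × ℝ → ℝ, Measurable w →
      Measurable fun z : (ℝ × ℝ) × ℝ × ℝ =>
        (Set.Ioc (min z.2.1 z.2.2) (max z.2.1 z.2.2)).indicator (1 : ℝ → ENNReal) (w z) := by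
    intro w hw
    simp only [Set.indicator_apply, Set.mem_Ioc, Pi.one_apply]
    exact Measurable.ite
      (MeasurableSet.inter (measurableSet_lt m1 hw) (measurableSet_le hw m2))
      measurable_const measurable_const
  exact (key _ measurable_fst.fst).mul (key _ measurable_fst.snd)

lemma measPsi (a b : ℝ) : Measurable fun q : ℝ × ℝ =>
    (Set.Ioc (min q.1 q.2) (max q.1 q.2)).indicator (1 : ℝ → ENNReal) a *
    (Set.Ioc (min q.1 q.2) (max q.1 q.2)).indicator (1 : ℝ → ENNReal) b := by
  have m1 : Measurable fun q : ℝ × ℝ => min q.1 q.2 := measurable_fst.min measurable_snd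
  have m2 : Measurable fun q : ℝ × ℝ => max q.1 q.2 := measurable_fst.max measurable_snd
  have key : ∀ c : ℝ, Measurable fun q : ℝ × ℝ =>
      (Set.Ioc (min q.1 q.2) (max q.1 q.2)).indicator (1 : ℝ → ENNReal) c := by
    intro c
    simp only [Set.indicator_apply, Set.mem_Ioc, Pi.one_apply]
    exact Measurable.ite
      (MeasurableSet.inter (measurableSet_lt m1 measurable_const)
        (measurableSet_le measurable_const m2))
      measurable_const measurable_const
  exact (key a).mul (key b)

lemma varKey (ν : Measure ℝ) [IsProbabilityMeasure ν] (hν : MemLp (id : ℝ → ℝ) 2 ν) :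
    ∫⁻ a, ∫⁻ b, ENNReal.ofReal (min (Gr ν a * (1 - Gr ν b)) ((1 - Gr ν a) * Gr ν b))
        ∂volume ∂volume
      = ENNReal.ofReal ((∫ x, x ^ 2 ∂ν) - (∫ x, x ∂ν) ^ 2) := by
  set M1 : ℝ := ∫ x, x ∂ν with hM1
  set M2 : ℝ := ∫ x, x ^ 2 ∂ν with hM2
  -- integrability facts
  have hint2 : Integrable (fun x : ℝ => x ^ 2) ν := by simpa using hν.integrable_sq
  have hint1 : Integrable (fun x : ℝ => x) ν := by exact hν.integrable one_le_two
  have hprod1 : Integrable (fun q : ℝ × ℝ => q.1 ^ 2 * 1) (ν.prod ν) :=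
    hint2.mul_prod (integrable_const 1)
  have hprod2 : Integrable (fun q : ℝ × ℝ => q.1 * q.2) (ν.prod ν) :=
    hint1.mul_prod hint1
  have hprod3 : Integrable (fun q : ℝ × ℝ => (1 : ℝ) * q.2 ^ 2) (ν.prod ν) :=
    (integrable_const 1).mul_prod hint2
  have hfun : (fun q : ℝ × ℝ => (q.1 - q.2) ^ 2)
      = fun q => q.1 ^ 2 * 1 - 2 * (q.1 * q.2) + 1 * q.2 ^ 2 := funext fun q => by ring
  have hQint : Integrable (fun q : ℝ × ℝ => (q.1 - q.2) ^ 2) (ν.prod ν) := by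
    rw [hfun]; exact (hprod1.sub (hprod2.const_mul 2)).add hprod3
  have hone : (∫ x : ℝ, (1 : ℝ) ∂ν) = 1 := by simp
  have hQval : (∫ q : ℝ × ℝ, (q.1 - q.2) ^ 2 ∂ν.prod ν) = 2 * M2 - 2 * M1 ^ 2 := by
    calc (∫ q : ℝ × ℝ, (q.1 - q.2) ^ 2 ∂ν.prod ν)
        = ∫ q : ℝ × ℝ, (q.1 ^ 2 * 1 - 2 * (q.1 * q.2)) + 1 * q.2 ^ 2 ∂ν.prod ν := by
          rw [hfun]
      _ = (∫ q : ℝ × ℝ, q.1 ^ 2 * 1 - 2 * (q.1 * q.2) ∂ν.prod ν)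
            + ∫ q : ℝ × ℝ, (1 : ℝ) * q.2 ^ 2 ∂ν.prod ν :=
          integral_add (hprod1.sub (hprod2.const_mul 2)) hprod3
      _ = ((∫ q : ℝ × ℝ, q.1 ^ 2 * 1 ∂ν.prod ν)
            - ∫ q : ℝ × ℝ, 2 * (q.1 * q.2) ∂ν.prod ν)
            + ∫ q : ℝ × ℝ, (1 : ℝ) * q.2 ^ 2 ∂ν.prod ν := by
          rw [integral_sub hprod1 (hprod2.const_mul 2)]
      _ = 2 * M2 - 2 * M1 ^ 2 := by
          rw [integral_const_mul,
            integral_prod_mul (fun x : ℝ => x ^ 2) (fun _ : ℝ => (1 : ℝ)),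
            integral_prod_mul (fun x : ℝ => x) (fun x : ℝ => x),
            integral_prod_mul (fun _ : ℝ => (1 : ℝ)) (fun x : ℝ => x ^ 2), hone]
          ring
  -- measurability of the basic integrand
  have hGmeas : Measurable fun p : ℝ × ℝ =>
      ENNReal.ofReal (min (Gr ν p.1 * (1 - Gr ν p.2)) ((1 - Gr ν p.1) * Gr ν p.2)) := by
    apply Measurable.ennreal_ofReal
    exact ((measurable_Gr.comp measurable_fst).mul
        (measurable_const.sub (measurable_Gr.comp measurable_snd))).min
      ((measurable_const.sub (measurable_Gr.comp measurable_fst)).mul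
        (measurable_Gr.comp measurable_snd))
  set T : ENNReal := ∫⁻ a, ∫⁻ b,
      ENNReal.ofReal (min (Gr ν a * (1 - Gr ν b)) ((1 - Gr ν a) * Gr ν b)) ∂volume ∂volume
    with hT
  have houter : Measurable fun a : ℝ => ∫⁻ b,
      ENNReal.ofReal (min (Gr ν a * (1 - Gr ν b)) ((1 - Gr ν a) * Gr ν b)) ∂volume :=
    Measurable.lintegral_prod_right' (f := fun p : ℝ × ℝ =>
      ENNReal.ofReal (min (Gr ν p.1 * (1 - Gr ν p.2)) ((1 - Gr ν p.1) * Gr ν p.2))) hGmeas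
  -- the big computation
  have key : 2 * T = 2 * ENNReal.ofReal (M2 - M1 ^ 2) := by
    calc 2 * T = ∫⁻ a, 2 * ∫⁻ b,
          ENNReal.ofReal (min (Gr ν a * (1 - Gr ν b)) ((1 - Gr ν a) * Gr ν b)) ∂volume
            ∂volume := (lintegral_const_mul 2 houter).symm
      _ = ∫⁻ a, ∫⁻ b, 2 *
          ENNReal.ofReal (min (Gr ν a * (1 - Gr ν b)) ((1 - Gr ν a) * Gr ν b)) ∂volume
            ∂volume := by
          refine lintegral_congr fun a => ?_
          exact (lintegral_const_mul 2 (hGmeas.comp measurable_prodMk_left)).symm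
      _ = ∫⁻ a, ∫⁻ b, ∫⁻ x, ∫⁻ y,
            (Set.Ioc (min x y) (max x y)).indicator (1 : ℝ → ENNReal) a *
            (Set.Ioc (min x y) (max x y)).indicator (1 : ℝ → ENNReal) b ∂ν ∂ν
            ∂volume ∂volume := by
          simp_rw [two_ofReal_min]
      _ = ∫⁻ a, ∫⁻ b, ∫⁻ q : ℝ × ℝ,
            (Set.Ioc (min q.1 q.2) (max q.1 q.2)).indicator (1 : ℝ → ENNReal) a *
            (Set.Ioc (min q.1 q.2) (max q.1 q.2)).indicator (1 : ℝ → ENNReal) b ∂ν.prod ν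
            ∂volume ∂volume := by
          refine lintegral_congr fun a => lintegral_congr fun b => ?_
          exact (lintegral_prod _ (measPsi a b).aemeasurable).symm
      _ = ∫⁻ p : ℝ × ℝ, ∫⁻ q : ℝ × ℝ,
            (Set.Ioc (min q.1 q.2) (max q.1 q.2)).indicator (1 : ℝ → ENNReal) p.1 *
            (Set.Ioc (min q.1 q.2) (max q.1 q.2)).indicator (1 : ℝ → ENNReal) p.2
            ∂ν.prod ν ∂(volume : Measure ℝ).prod volume :=
          (lintegral_prod _ (Measurable.lintegral_prod_right' measPhi).aemeasurable).symm
      _ = ∫⁻ q : ℝ × ℝ, ∫⁻ p : ℝ × ℝ,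
            (Set.Ioc (min q.1 q.2) (max q.1 q.2)).indicator (1 : ℝ → ENNReal) p.1 *
            (Set.Ioc (min q.1 q.2) (max q.1 q.2)).indicator (1 : ℝ → ENNReal) p.2
            ∂(volume : Measure ℝ).prod volume ∂ν.prod ν := by
          rw [← lintegral_prod _ measPhi.aemeasurable,
            lintegral_prod_symm _ measPhi.aemeasurable]
      _ = ∫⁻ q : ℝ × ℝ, ENNReal.ofReal ((q.1 - q.2) ^ 2) ∂ν.prod ν := by
          refine lintegral_congr fun q => ?_
          have hm : Measurable fun p : ℝ × ℝ =>
              (Set.Ioc (min q.1 q.2) (max q.1 q.2)).indicator (1 : ℝ → ENNReal) p.1 *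
              (Set.Ioc (min q.1 q.2) (max q.1 q.2)).indicator (1 : ℝ → ENNReal) p.2 :=
            ((measurable_one.indicator measurableSet_Ioc).comp measurable_fst).mul
              ((measurable_one.indicator measurableSet_Ioc).comp measurable_snd)
          rw [lintegral_prod _ hm.aemeasurable]
          exact leb_double q.1 q.2
      _ = ENNReal.ofReal (∫ q : ℝ × ℝ, (q.1 - q.2) ^ 2 ∂ν.prod ν) :=
          (ofReal_integral_eq_lintegral_ofReal hQint
            (Filter.Eventually.of_forall fun q => sq_nonneg _)).symm
      _ = 2 * ENNReal.ofReal (M2 - M1 ^ 2) := by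
          rw [hQval, show 2 * M2 - 2 * M1 ^ 2 = 2 * (M2 - M1 ^ 2) by ring,
            ENNReal.ofReal_mul (by norm_num : (0 : ℝ) ≤ 2)]
          norm_num
  have h2 : (2 : ENNReal) ≠ 0 := by norm_num
  have h2' : (2 : ENNReal) ≠ ⊤ := by norm_num
  exact (ENNReal.mul_right_inj h2 h2').mp key

end Aux

/-- Proposition 2.9: `Var(X) = K(α, α^R)` where `α` is the pushforward
of Lebesgue measure under `a ↦ P(X ≥ a)`. -/
theorem stmt_8 {Ω : Type*} [MeasurableSpace Ω] (μ : Measure Ω) [IsProbabilityMeasure μ]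
    (X : Ω → ℝ) (hX : MemLp X 2 μ) :
    Kc 0 (pushCDF μ X) (revM (pushCDF μ X)) =
      ENNReal.ofReal ((∫ ω, X ω ^ 2 ∂μ) - (∫ ω, X ω ∂μ) ^ 2) := by
  classical
  have hXm : AEMeasurable X μ := hX.aestronglyMeasurable.aemeasurable
  set ν : Measure ℝ := μ.map X with hν
  have hprob : IsProbabilityMeasure ν := Measure.isProbabilityMeasure_map hXm
  have hGeq : ∀ a : ℝ, (μ {ω | a ≤ X ω}).toReal = Gr ν a := by
    intro a
    rw [hν, Gr, Measure.map_apply_of_aemeasurable hXm measurableSet_Ici]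
    rfl
  set φ : ℝ → Set.Icc (0 : ℝ) 1 := fun a : ℝ => (⟨(μ {ω | a ≤ X ω}).toReal,
    Set.mem_Icc.mpr ⟨ENNReal.toReal_nonneg, by
      simpa using ENNReal.toReal_mono (by simp) (prob_le_one (μ := μ))⟩⟩ :
    Set.Icc (0 : ℝ) 1) with hφdef
  have hpush : pushCDF μ X = Measure.map φ volume := rfl
  have hGrm : Measurable fun a : ℝ => (μ {ω | a ≤ X ω}).toReal := by
    have : (fun a : ℝ => (μ {ω | a ≤ X ω}).toReal) = Gr ν := funext hGeq
    rw [this]; exact measurable_Gr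
  have hφ : Measurable φ := hGrm.subtype_mk
  have hφ1 : ∀ a : ℝ, (φ a).1 = Gr ν a := hGeq
  set r : Set.Icc (0 : ℝ) 1 → Set.Icc (0 : ℝ) 1 := fun x => ⟨1 - x.1,
    Set.mem_Icc.mpr ⟨by linarith [(Set.mem_Icc.mp x.2).2], by
      linarith [(Set.mem_Icc.mp x.2).1]⟩⟩ with hrdef
  have hrev : revM (pushCDF μ X) = (pushCDF μ X).map r := rfl
  have hr : Measurable r := (measurable_const.sub measurable_subtype_coe).subtype_mk
  have mcoe : Measurable fun y : Set.Icc (0 : ℝ) 1 => (y.1 : ℝ) := measurable_subtype_coe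
  have hmem : MemLp (id : ℝ → ℝ) 2 ν :=
    (memLp_map_measure_iff aestronglyMeasurable_id hXm).mpr hX
  have hm1 : (∫ x, x ∂ν) = ∫ ω, X ω ∂μ := integral_map hXm aestronglyMeasurable_id
  have hm2 : (∫ x, x ^ 2 ∂ν) = ∫ ω, X ω ^ 2 ∂μ :=
    integral_map hXm (continuous_pow 2).aestronglyMeasurable
  have hφcoe : Measurable fun p : Set.Icc (0 : ℝ) 1 × ℝ => ((φ p.2).1 : ℝ) := by
    have : (fun p : Set.Icc (0 : ℝ) 1 × ℝ => ((φ p.2).1 : ℝ)) = fun p => Gr ν p.2 :=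
      funext fun p => hφ1 p.2
    rw [this]; exact measurable_Gr.comp measurable_snd
  calc Kc 0 (pushCDF μ X) (revM (pushCDF μ X))
      = ∫⁻ x, ∫⁻ y, ENNReal.ofReal (min (x.1 * y.1) ((1 - x.1) * (1 - y.1)))
          ∂(revM (pushCDF μ X)) ∂(pushCDF μ X) := by
        simp only [Kc, sub_zero, Real.sqrt_one, one_mul, div_one]
    _ = ∫⁻ x, ∫⁻ y, ENNReal.ofReal (min (x.1 * (1 - y.1)) ((1 - x.1) * y.1))
          ∂(pushCDF μ X) ∂(pushCDF μ X) := by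
        refine lintegral_congr fun x => ?_
        rw [hrev, lintegral_map (f := fun y : Set.Icc (0 : ℝ) 1 =>
          ENNReal.ofReal (min (x.1 * y.1) ((1 - x.1) * (1 - y.1)))) (((measurable_const.mul mcoe).min
          (measurable_const.mul (measurable_const.sub mcoe))).ennreal_ofReal) hr]
        refine lintegral_congr fun y => ?_
        have h1 : ((r y).1 : ℝ) = 1 - y.1 := rfl
        rw [h1, sub_sub_cancel]
    _ = ∫⁻ x, ∫⁻ b, ENNReal.ofReal (min (x.1 * (1 - (φ b).1)) ((1 - x.1) * (φ b).1))
          ∂volume ∂(pushCDF μ X) := by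
        refine lintegral_congr fun x => ?_
        rw [hpush, lintegral_map (f := fun y : Set.Icc (0 : ℝ) 1 =>
          ENNReal.ofReal (min (x.1 * (1 - y.1)) ((1 - x.1) * y.1))) (((measurable_const.mul (measurable_const.sub mcoe)).min
          (measurable_const.mul mcoe)).ennreal_ofReal) hφ]
    _ = ∫⁻ a, ∫⁻ b, ENNReal.ofReal (min ((φ a).1 * (1 - (φ b).1)) ((1 - (φ a).1) * (φ b).1))
          ∂volume ∂volume := by
        rw [hpush]
        refine lintegral_map ?_ hφ
        refine Measurable.lintegral_prod_right' (f := fun p : Set.Icc (0 : ℝ) 1 × ℝ =>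
          ENNReal.ofReal (min (p.1.1 * (1 - (φ p.2).1)) ((1 - p.1.1) * (φ p.2).1))) ?_
        exact (((mcoe.comp measurable_fst).mul (measurable_const.sub hφcoe)).min
          ((measurable_const.sub (mcoe.comp measurable_fst)).mul hφcoe)).ennreal_ofReal
    _ = ∫⁻ a, ∫⁻ b, ENNReal.ofReal (min (Gr ν a * (1 - Gr ν b)) ((1 - Gr ν a) * Gr ν b))
          ∂volume ∂volume := by
        refine lintegral_congr fun a => lintegral_congr fun b => ?_
        rw [hφ1, hφ1]
    _ = ENNReal.ofReal ((∫ x, x ^ 2 ∂ν) - (∫ x, x ∂ν) ^ 2) := varKey ν hmem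
    _ = ENNReal.ofReal ((∫ ω, X ω ^ 2 ∂μ) - (∫ ω, X ω ∂μ) ^ 2) := by rw [hm1, hm2]
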